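/- Given two CRAs M₁ and M₂ over the cost model (ℚ, +), there exists a CRA M over (ℚ, +) such that M(w) = M₁(w) − M₂(w) for all input strings w. -/

import Mathlib

/-- A cost register automaton over the additive grammar `G(⊗)` for a commutative
monoid `(D, ⊗)` (written additively): a deterministic finite-state machine with
finitely many write-only registers, where each register is updated at each step to
a `⊗`-sum of registers (with multiplicities) and a constant. -/
structure AddCRA (σ D : Type*) where
  Q : Type*
  finQ : Fintype Q
  q0 : Q
  X : Type*
  finX : Fintype X
  δ : Q → σ → Q
  /-- `ρ q a x = (coef, c)` means `x := (⊗_y coef y • y) ⊗ c`. -/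
  ρ : Q → σ → X → (X → ℕ) × D
  μ : Q → Option ((X → ℕ) × D)

namespace AddCRA

variable {σ D : Type*} [AddCommMonoid D]

/-- Value of an update expression under a register valuation. -/
def evalE (M : AddCRA σ D) (ν : M.X → D) (e : (M.X → ℕ) × D) : D :=
  letI := M.finX
  (∑ x, e.1 x • ν x) + e.2

/-- One step of the machine on input symbol `a`. -/
def step (M : AddCRA σ D) (cfg : M.Q × (M.X → D)) (a : σ) : M.Q × (M.X → D) :=
  (M.δ cfg.1 a, fun x => M.evalE cfg.2 (M.ρ cfg.1 a x))

/-- The configuration reached on input word `w`, registers initialized to `0`. -/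
def run (M : AddCRA σ D) (w : List σ) : M.Q × (M.X → D) :=
  w.foldl M.step (M.q0, fun _ => 0)

/-- The (partial) output of the machine on input word `w`. -/
def output (M : AddCRA σ D) (w : List σ) : Option D :=
  (M.μ (M.run w).1).map (M.evalE (M.run w).2)

/-- A CRA is copyless if in each transition every register appears at most once
across all right-hand sides of register updates, and at most once in each output
expression. -/
def Copyless (M : AddCRA σ D) : Prop :=
  (∀ q a (x : M.X), (letI := M.finX; ∑ y, (M.ρ q a y).1 x) ≤ 1) ∧
  (∀ q e, M.μ q = some e → ∀ x, e.1 x ≤ 1)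

end AddCRA

theorem AddCRA.run_append' {σ D : Type*} [AddCommMonoid D] (N : AddCRA σ D)
    (w : List σ) (a : σ) : N.run (w ++ [a]) = N.step (N.run w) a := by
  simp [AddCRA.run, List.foldl_append]

/-- Transport a CRA along equivalences of its state and register types. -/
def AddCRA.transport {σ D : Type*} (M : AddCRA σ D) {Q' X' : Type*}
    (eQ : M.Q ≃ Q') (eX : M.X ≃ X') : AddCRA σ D where
  Q := Q'
  finQ := letI := M.finQ; Fintype.ofEquiv M.Q eQ
  q0 := eQ M.q0
  X := X'
  finX := letI := M.finX; Fintype.ofEquiv M.X eX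
  δ := fun q a => eQ (M.δ (eQ.symm q) a)
  ρ := fun q a x =>
    ((M.ρ (eQ.symm q) a (eX.symm x)).1 ∘ eX.symm, (M.ρ (eQ.symm q) a (eX.symm x)).2)
  μ := fun q => (M.μ (eQ.symm q)).map (fun e => (e.1 ∘ eX.symm, e.2))

theorem AddCRA.transport_evalE {σ D : Type*} [AddCommMonoid D] (M : AddCRA σ D)
    {Q' X' : Type*} (eQ : M.Q ≃ Q') (eX : M.X ≃ X') (ν : M.X → D)
    (e : (M.X → ℕ) × D) :
    (M.transport eQ eX).evalE (fun x => ν (eX.symm x)) (e.1 ∘ eX.symm, e.2) =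
      M.evalE ν e := by
  letI := M.finX
  letI : Fintype X' := Fintype.ofEquiv M.X eX
  simp only [evalE, transport]
  congr 1
  exact (Fintype.sum_equiv eX _ _ (fun x => by simp)).symm

theorem AddCRA.transport_run {σ D : Type*} [AddCommMonoid D] (M : AddCRA σ D)
    {Q' X' : Type*} (eQ : M.Q ≃ Q') (eX : M.X ≃ X') (w : List σ) :
    (M.transport eQ eX).run w =
      (eQ (M.run w).1, fun x => (M.run w).2 (eX.symm x)) := by
  induction w using List.reverseRecOn with
  | nil =>
      simp only [run, List.foldl_nil]
      rfl
  | append_singleton w a ih =>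
      rw [run_append', run_append', ih]
      simp only [step, Equiv.symm_apply_apply, transport]
      refine Prod.ext rfl ?_
      funext x
      exact M.transport_evalE eQ eX (M.run w).2 (M.ρ (M.run w).1 a (eX.symm x))

theorem AddCRA.transport_output {σ D : Type*} [AddCommMonoid D] (M : AddCRA σ D)
    {Q' X' : Type*} (eQ : M.Q ≃ Q') (eX : M.X ≃ X') (w : List σ) :
    (M.transport eQ eX).output w = M.output w := by
  rw [output, output, transport_run]
  show ((M.transport eQ eX).μ (eQ (M.run w).1)).map _ = _
  have : (M.transport eQ eX).μ (eQ (M.run w).1) =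
      (M.μ (M.run w).1).map (fun e => (e.1 ∘ eX.symm, e.2)) := by
    simp [transport]
  rw [this]
  cases h : M.μ (M.run w).1 with
  | none => rfl
  | some e =>
      simp only [Option.map_some, Option.some.injEq, Option.map]
      exact M.transport_evalE eQ eX (M.run w).2 e

theorem AddCRA.diff_closure {σ : Type*} (M₁ M₂ : AddCRA σ ℚ) :
    ∃ M : AddCRA σ ℚ,
      ∀ (w : List σ) (d₁ d₂ : ℚ),
        M₁.output w = some d₁ → M₂.output w = some d₂ →
          M.output w = some (d₁ - d₂) := by
  classical
  letI := M₁.finQ; letI := M₂.finQ; letI := M₁.finX; letI := M₂.finX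
  set M₀ : AddCRA σ ℚ :=
    { Q := M₁.Q × M₂.Q
      finQ := inferInstance
      q0 := (M₁.q0, M₂.q0)
      X := M₁.X ⊕ M₂.X
      finX := inferInstance
      δ := fun q a => (M₁.δ q.1 a, M₂.δ q.2 a)
      ρ := fun q a x =>
        match x with
        | Sum.inl x => (Sum.elim (M₁.ρ q.1 a x).1 (fun _ => 0), (M₁.ρ q.1 a x).2)
        | Sum.inr x => (Sum.elim (fun _ => 0) (M₂.ρ q.2 a x).1, -(M₂.ρ q.2 a x).2)
      μ := fun q =>
        match M₁.μ q.1, M₂.μ q.2 with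
        | some e₁, some e₂ => some (Sum.elim e₁.1 e₂.1, e₁.2 - e₂.2)
        | _, _ => none } with hM
  have main : ∀ (w : List σ) (d₁ d₂ : ℚ),
      M₁.output w = some d₁ → M₂.output w = some d₂ →
        M₀.output w = some (d₁ - d₂) := by
    have key : ∀ w : List σ,
        (M₀.run w).1 = ((M₁.run w).1, (M₂.run w).1) ∧
        (M₀.run w).2 = Sum.elim (M₁.run w).2 (fun x => -(M₂.run w).2 x) := by
      intro w
      induction w using List.reverseRecOn with
      | nil =>
          constructor
          · rfl
          · funext x; cases x <;> simp [run]
      | append_singleton w a ih =>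
          rw [run_append', run_append', run_append']
          obtain ⟨h1, h2⟩ := ih
          constructor
          · simp [step, h1, hM, M₀]
          · funext x
            cases x with
            | inl x =>
                simp only [step, h1, h2, hM, M₀, Sum.elim_inl, evalE]
                rw [Fintype.sum_sum_type]
                simp
            | inr x =>
                simp only [step, h1, h2, hM, M₀, Sum.elim_inr, evalE]
                rw [Fintype.sum_sum_type]
                simp only [Sum.elim_inl, Sum.elim_inr, zero_smul, Finset.sum_const_zero,
                  zero_add, smul_neg, Finset.sum_neg_distrib]
                ring
    intro w d₁ d₂ h₁ h₂
    obtain ⟨h1, h2⟩ := key w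
    simp only [output, Option.map_eq_some_iff] at h₁ h₂ ⊢
    obtain ⟨e₁, he₁, hv₁⟩ := h₁
    obtain ⟨e₂, he₂, hv₂⟩ := h₂
    refine ⟨(Sum.elim e₁.1 e₂.1, e₁.2 - e₂.2), ?_, ?_⟩
    · rw [h1]; simp [hM, M₀, he₁, he₂]
    · rw [h2]
      simp only [evalE] at hv₁ hv₂ ⊢
      rw [Fintype.sum_sum_type]
      simp only [Sum.elim_inl, Sum.elim_inr, smul_neg, Finset.sum_neg_distrib]
      rw [← hv₁, ← hv₂]; ring
  refine ⟨M₀.transport (equivShrink _) (equivShrink _), fun w d₁ d₂ h₁ h₂ => ?_⟩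
  rw [AddCRA.transport_output]
  exact main w d₁ d₂ h₁ h₂
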